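/- If f is analytic on the open unit disk with f(0)=0, f'(0)=1, and |z f'(z) - f(z)| < 1/2 for all z in the disk, then 1 - |z| ≤ |f'(z)| ≤ 1 + |z| for all z in the disk. -/

import Mathlib

open Metric Complex Set

theorem stmt_2 (f : ℂ → ℂ)
    (hf : DifferentiableOn ℂ f (ball (0:ℂ) 1))
    (hf0 : f 0 = 0) (hf1 : deriv f 0 = 1)
    (hΩ : ∀ z ∈ ball (0:ℂ) 1, ‖z * deriv f z - f z‖ < 1/2) :
    ∀ z ∈ ball (0:ℂ) 1,
      1 - ‖z‖ ≤ ‖deriv f z‖ ∧ ‖deriv f z‖ ≤ 1 + ‖z‖ := by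
  have h01 : (0:ℂ) ∈ ball (0:ℂ) 1 := by simp
  have hb : ball (0:ℂ) 1 ∈ nhds (0:ℂ) := ball_mem_nhds _ one_pos
  have hfa : AnalyticOnNhd ℂ f (ball (0:ℂ) 1) := hf.analyticOnNhd isOpen_ball
  have hf' : DifferentiableOn ℂ (deriv f) (ball (0:ℂ) 1) :=
    hfa.deriv.differentiableOn
  set g : ℂ → ℂ := fun w => w * deriv f w - f w with hgdef
  have hg : DifferentiableOn ℂ g (ball (0:ℂ) 1) :=
    (differentiableOn_id.mul hf').sub hf
  have hg0 : g 0 = 0 := by simp [hgdef, hf0]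
  -- deriv g 0 = 0
  have hgd0 : deriv g 0 = 0 := by
    have h2 : HasDerivAt (deriv f) (deriv (deriv f) 0) 0 :=
      ((hfa.deriv 0 h01).differentiableAt).hasDerivAt
    have h1 : HasDerivAt (fun w : ℂ => w * deriv f w)
        (1 * deriv f 0 + 0 * deriv (deriv f) 0) 0 :=
      (hasDerivAt_id 0).mul h2
    have h3 : HasDerivAt f (deriv f 0) 0 := (hf.differentiableAt hb).hasDerivAt
    have h4 : HasDerivAt g (1 * deriv f 0 + 0 * deriv (deriv f) 0 - deriv f 0) 0 :=
      h1.sub h3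
    rw [h4.deriv]; ring
  -- first Schwarz: k := dslope g 0
  set k : ℂ → ℂ := fun w => dslope g 0 w with hkdef
  have hmaps : Set.MapsTo g (ball (0:ℂ) 1) (ball (g 0) (1/2)) := by
    intro w hw
    rw [mem_ball, dist_eq_norm, hg0, sub_zero]
    exact hΩ w hw
  have hk_le : ∀ w ∈ ball (0:ℂ) 1, ‖k w‖ ≤ 1/2 := by
    intro w hw
    have := Complex.norm_dslope_le_div_of_mapsTo_ball hg (hmaps.mono_right ball_subset_closedBall) hw
    simpa using this
  have hkd : DifferentiableOn ℂ k (ball (0:ℂ) 1) :=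
    (differentiableOn_dslope hb).2 hg
  have hk0 : k 0 = 0 := by rw [hkdef]; simp only [dslope_same]; exact hgd0
  -- second Schwarz: m := dslope k 0
  set m : ℂ → ℂ := fun w => dslope k 0 w with hmdef
  have hmd : DifferentiableOn ℂ m (ball (0:ℂ) 1) :=
    (differentiableOn_dslope hb).2 hkd
  have hm_le : ∀ w ∈ ball (0:ℂ) 1, ‖m w‖ ≤ 1/2 := by
    intro w hw
    by_contra hcon
    push_neg at hcon
    set ε := (‖m w‖ - 1/2)/2 with hε
    have hεpos : 0 < ε := by rw [hε]; linarith
    have hmaps2 : Set.MapsTo k (ball (0:ℂ) 1) (ball (k 0) (1/2 + ε)) := by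
      intro v hv
      rw [mem_ball, dist_eq_norm, hk0, sub_zero]
      exact lt_of_le_of_lt (hk_le v hv) (by linarith)
    have := Complex.norm_dslope_le_div_of_mapsTo_ball hkd (hmaps2.mono_right ball_subset_closedBall) hw
    rw [div_one] at this
    have : ‖m w‖ ≤ 1/2 + ε := this
    rw [hε] at this; linarith
  -- basic identities
  have hgk : ∀ w : ℂ, w * k w = g w := by
    intro w
    have := sub_smul_dslope g 0 w
    simpa [hg0, smul_eq_mul] using this
  have hkm : ∀ w : ℂ, w * m w = k w := by
    intro w
    have := sub_smul_dslope k 0 w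
    simpa [hk0, smul_eq_mul] using this
  set F : ℂ → ℂ := fun w => dslope f 0 w with hFdef
  have hFf : ∀ w : ℂ, w * F w = f w := by
    intro w
    have := sub_smul_dslope f 0 w
    simpa [hf0, smul_eq_mul] using this
  have hF0 : F 0 = 1 := by rw [hFdef]; simp only [dslope_same]; exact hf1
  have hFd : DifferentiableOn ℂ F (ball (0:ℂ) 1) :=
    (differentiableOn_dslope hb).2 hf
  -- deriv F = m away from 0
  have hFderiv : ∀ w ∈ ball (0:ℂ) 1, w ≠ 0 → HasDerivAt F (m w) w := by
    intro w hw hw0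
    have hwnhds : {v : ℂ | v ≠ 0} ∈ nhds w :=
      isOpen_compl_singleton.mem_nhds hw0
    have heq : F =ᶠ[nhds w] fun v => f v / v := by
      filter_upwards [hwnhds] with v hv
      rw [hFdef]
      simp only [dslope_of_ne _ hv, slope_def_field, sub_zero, hf0]
    have hdf : HasDerivAt (fun v => f v / v)
        ((deriv f w * w - f w * 1) / w ^ 2) w :=
      ((hf.differentiableAt (isOpen_ball.mem_nhds hw)).hasDerivAt).div
        (hasDerivAt_id w) hw0
    have hFd' : HasDerivAt F ((deriv f w * w - f w * 1) / w ^ 2) w :=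
      hdf.congr_of_eventuallyEq heq
    have hval : (deriv f w * w - f w * 1) / w ^ 2 = m w := by
      have h1 : w * (w * m w) = w * deriv f w - f w := by
        rw [hkm w, hgk w]
      have h2 : w ^ 2 * m w = w * deriv f w - f w := by linear_combination h1
      rw [div_eq_iff (pow_ne_zero 2 hw0)]
      linear_combination -h2
    rwa [hval] at hFd'
  -- key bound : ‖F z - 1‖ ≤ ‖z‖/2 for z in ball
  intro z hz
  rcases eq_or_ne z 0 with rfl | hz0
  · simp [hf1]
  have hzlt : ‖z‖ < 1 := by simpa [mem_ball, dist_eq_norm] using hz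
  have hmem : ∀ t : ℝ, t ∈ Icc (0:ℝ) 1 → (t:ℂ) * z ∈ ball (0:ℂ) 1 := by
    intro t ht
    rw [mem_ball, dist_zero_right, norm_mul, Complex.norm_real]
    calc |t| * ‖z‖ ≤ 1 * ‖z‖ := by
          apply mul_le_mul_of_nonneg_right _ (norm_nonneg z)
          rw [abs_le]; constructor <;> linarith [ht.1, ht.2]
      _ < 1 := by rwa [one_mul]
  set u : ℝ → ℂ := fun t => F ((t:ℂ) * z) with hudef
  have hucont : ContinuousOn u (Icc 0 1) := by
    apply hFd.continuousOn.comp _ hmem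
    exact (Complex.continuous_ofReal.mul continuous_const).continuousOn
  have huderiv : ∀ t ∈ Ioo (0:ℝ) 1, HasDerivAt u (m ((t:ℂ) * z) * z) t := by
    intro t ht
    have htmem : (t:ℂ) * z ∈ ball (0:ℂ) 1 := hmem t ⟨ht.1.le, ht.2.le⟩
    have htne : (t:ℂ) * z ≠ 0 :=
      mul_ne_zero (by exact_mod_cast ht.1.ne') hz0
    have hF' : HasDerivAt F (m ((t:ℂ) * z)) ((t:ℂ) * z) :=
      hFderiv _ htmem htne
    have hinner : HasDerivAt (fun w : ℂ => w * z) z (t:ℂ) := hasDerivAt_mul_const z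
    have hcomp : HasDerivAt (fun w : ℂ => F (w * z)) (m ((t:ℂ) * z) * z) (t:ℂ) :=
      HasDerivAt.comp _ hF' hinner
    exact hcomp.comp_ofReal
  have hint : IntervalIntegrable (fun t : ℝ => m ((t:ℂ) * z) * z)
      MeasureTheory.volume 0 1 := by
    apply ContinuousOn.intervalIntegrable
    rw [Set.uIcc_of_le zero_le_one]
    exact ((hmd.continuousOn.comp
      ((Complex.continuous_ofReal.mul continuous_const).continuousOn) hmem).mul
      continuousOn_const)
  have hFTC : ∫ t in (0:ℝ)..1, m ((t:ℂ) * z) * z = u 1 - u 0 :=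
    intervalIntegral.integral_eq_sub_of_hasDeriv_right_of_le zero_le_one
      hucont (fun t ht => (huderiv t ht).hasDerivWithinAt) hint
  have hu1 : u 1 = F z := by simp [hudef]
  have hu0 : u 0 = 1 := by simp [hudef, hF0]
  have hbound : ‖F z - 1‖ ≤ ‖z‖ / 2 := by
    rw [← hu1, ← hu0, ← hFTC]
    have := intervalIntegral.norm_integral_le_of_norm_le_const
      (C := ‖z‖/2) (f := fun t : ℝ => m ((t:ℂ) * z) * z) (a := 0) (b := 1) ?_
    · simpa using this
    · intro t ht
      rw [Set.uIoc_of_le zero_le_one] at ht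
      have htmem : (t:ℂ) * z ∈ ball (0:ℂ) 1 := hmem t ⟨ht.1.le, ht.2⟩
      rw [norm_mul]
      calc ‖m ((t:ℂ)*z)‖ * ‖z‖ ≤ (1/2) * ‖z‖ :=
            mul_le_mul_of_nonneg_right (hm_le _ htmem) (norm_nonneg z)
        _ = ‖z‖ / 2 := by ring
  -- deriv f z = z * m z + F z
  have hderiv_eq : deriv f z = z * m z + F z := by
    have h1 : z * deriv f z = g z + f z := by rw [hgdef]; ring
    have h2 : z * deriv f z = z * (z * m z) + z * F z := by
      rw [h1, ← hgk z, ← hkm z, hFf]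
    exact mul_left_cancel₀ hz0 (h2.trans (mul_add z (z * m z) (F z)).symm)
  have hzm : ‖z * m z‖ ≤ ‖z‖ / 2 := by
    rw [norm_mul]
    calc ‖z‖ * ‖m z‖ ≤ ‖z‖ * (1/2) :=
          mul_le_mul_of_nonneg_left (hm_le z hz) (norm_nonneg z)
      _ = ‖z‖ / 2 := by ring
  have hkey : ‖deriv f z - 1‖ ≤ ‖z‖ := by
    have : deriv f z - 1 = z * m z + (F z - 1) := by rw [hderiv_eq]; ring
    rw [this]
    calc ‖z * m z + (F z - 1)‖ ≤ ‖z * m z‖ + ‖F z - 1‖ := norm_add_le _ _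
      _ ≤ ‖z‖ / 2 + ‖z‖ / 2 := add_le_add hzm hbound
      _ = ‖z‖ := by ring
  constructor
  · have h1 : ‖(1:ℂ)‖ - ‖deriv f z‖ ≤ ‖(1:ℂ) - deriv f z‖ := norm_sub_norm_le _ _
    rw [norm_sub_rev] at h1
    rw [norm_one] at h1
    linarith
  · have h2 : ‖deriv f z‖ - ‖(1:ℂ)‖ ≤ ‖deriv f z - 1‖ := norm_sub_norm_le _ _
    rw [norm_one] at h2
    linarith
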